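/- Let (S,D) be a complete metric space, φ: S → [0,∞], and λ ∈ ℝ; set λ⁻ := −λ if λ ≤ 0 and interpret 1/λ⁻ := +∞ if λ ≥ 0. Let z₀, z₁ ∈ S with φ(z₀) < ∞ and φ(z₁) < ∞, and suppose there exists a curve (γ_s)_{s∈[0,1]} ⊂ S with γ₀ = z₀ and γ₁ = z₁ such that for all τ ∈ (0, 1/λ⁻) and all s ∈ [0,1] one has Φ(τ,z₀;γ_s) ≤ (1−s)·Φ(τ,z₀;γ₀) + s·Φ(τ,z₀;γ₁) − ½(1/τ + λ)·s(1−s)·D(z₀,z₁)², where Φ(τ,u;v) := D(v,u)²/(2τ) + φ(v). Then for all s ∈ [0,1]: (i) D(z₀, γ_s) ≤ s·D(z₀,z₁), and (ii) φ(γ_s) ≤ (1−s)·φ(z₀) + s·φ(z₁) + s·(λ⁻/2)·D(z₀,z₁)² (where λ⁻/2 is taken to be 0 when λ ≥ 0). -/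

import Mathlib

open Filter Topology Set ENNReal

set_option maxHeartbeats 1000000 in
/-- If the Moreau–Yosida functionals `Φ(τ,z₀;·)` are `λ`-convex along the
curve `γ` for all `τ ∈ (0, 1/λ⁻)`, then `γ` satisfies the distance estimate
`D(z₀,γ_s) ≤ s·D(z₀,z₁)` and the convexity estimate
`φ(γ_s) ≤ (1−s)φ(z₀) + sφ(z₁) + s·(λ⁻/2)·D(z₀,z₁)²`. -/
theorem lambda_convexity_implies_generalized_geodesic_property
    {S : Type*} [MetricSpace S] [CompleteSpace S]
    (φ : S → ℝ≥0∞) (lam : ℝ) (z0 z1 : S)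
    (h0 : φ z0 ≠ ⊤) (h1 : φ z1 ≠ ⊤)
    (γ : ℝ → S) (hγ0 : γ 0 = z0) (hγ1 : γ 1 = z1)
    (hconv : ∀ τ : ℝ, 0 < τ → (lam < 0 → τ < 1 / (-lam)) →
      ∀ s ∈ Icc (0:ℝ) 1,
        ((dist (γ s) z0 ^ 2 / (2 * τ) : ℝ) : EReal) + (φ (γ s) : EReal) ≤
          ((1 - s : ℝ) : EReal) *
              (((dist (γ 0) z0 ^ 2 / (2 * τ) : ℝ) : EReal) + (φ (γ 0) : EReal))
            + ((s : ℝ) : EReal) *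
              (((dist (γ 1) z0 ^ 2 / (2 * τ) : ℝ) : EReal) + (φ (γ 1) : EReal))
            - ((2⁻¹ * (1 / τ + lam) * (s * (1 - s)) * dist z0 z1 ^ 2 : ℝ) : EReal)) :
    ∀ s ∈ Icc (0:ℝ) 1,
      dist z0 (γ s) ≤ s * dist z0 z1 ∧
      φ (γ s) ≤ ENNReal.ofReal (1 - s) * φ z0 + ENNReal.ofReal s * φ z1 +
        ENNReal.ofReal (s * (max (-lam) 0 / 2) * dist z0 z1 ^ 2) := by
  have ecoe : ∀ x : ℝ≥0∞, x ≠ ⊤ → ((x.toReal : ℝ) : EReal) = (x : EReal) := by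
    intro x hx
    rw [← EReal.toReal_coe_ennreal]
    exact EReal.coe_toReal (by simpa using hx) (EReal.coe_ennreal_ne_bot x)
  intro s hs
  obtain ⟨hs0, hs1⟩ := hs
  set f0 := (φ z0).toReal with hf0
  set f1 := (φ z1).toReal with hf1
  set d := dist z0 z1 with hd
  set a := dist (γ s) z0 with ha
  have hd0 : 0 ≤ d := dist_nonneg
  have ha0 : 0 ≤ a := dist_nonneg
  have hf00 : 0 ≤ f0 := ENNReal.toReal_nonneg
  have hf10 : 0 ≤ f1 := ENNReal.toReal_nonneg
  -- Step 1: the EReal inequality with real RHS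
  have key : ∀ τ : ℝ, 0 < τ → (lam < 0 → τ < 1 / (-lam)) →
      ((a ^ 2 / (2 * τ) : ℝ) : EReal) + (φ (γ s) : EReal) ≤
        (((1 - s) * f0 + s * (d ^ 2 / (2 * τ) + f1)
          - 2⁻¹ * (1 / τ + lam) * (s * (1 - s)) * d ^ 2 : ℝ) : EReal) := by
    intro τ hτ hτ'
    have h := hconv τ hτ hτ' s ⟨hs0, hs1⟩
    rw [hγ0, hγ1, ← ecoe _ h0, ← ecoe _ h1] at h
    rw [dist_self, dist_comm z1 z0] at h
    refine h.trans (le_of_eq ?_)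
    rw [hf0, hf1, hd]
    norm_cast
    ring
  -- Step 2: φ (γ s) is finite
  have habound : ∀ τ : ℝ, 0 < τ → (lam < 0 → τ < 1 / (-lam)) →
      (φ (γ s) : EReal) ≤
        (((1 - s) * f0 + s * (d ^ 2 / (2 * τ) + f1)
          - 2⁻¹ * (1 / τ + lam) * (s * (1 - s)) * d ^ 2 : ℝ) : EReal) := by
    intro τ hτ hτ'
    refine le_trans ?_ (key τ hτ hτ')
    have h2 : (0 : EReal) ≤ ((a ^ 2 / (2 * τ) : ℝ) : EReal) := by
      exact_mod_cast div_nonneg (sq_nonneg a) (by linarith)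
    calc (φ (γ s) : EReal) = 0 + (φ (γ s) : EReal) := by rw [zero_add]
      _ ≤ _ := add_le_add_left h2 _
  -- a valid τ
  obtain ⟨τ₀, hτ₀, hτ₀'⟩ : ∃ τ : ℝ, 0 < τ ∧ (lam < 0 → τ < 1 / (-lam)) := by
    rcases lt_or_ge lam 0 with hl | hl
    · refine ⟨1 / (2 * (-lam)), div_pos one_pos (by linarith), fun _ => ?_⟩
      rw [div_lt_div_iff₀ (by linarith) (by linarith)]
      nlinarith
    · exact ⟨1, one_pos, fun h => absurd h (not_lt.2 hl)⟩
  have hfin : φ (γ s) ≠ ⊤ := by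
    intro htop
    have h3 := habound τ₀ hτ₀ hτ₀'
    rw [htop] at h3
    simp only [EReal.coe_ennreal_top] at h3
    exact (EReal.coe_lt_top _).not_ge h3
  set f := (φ (γ s)).toReal with hf
  have hff : 0 ≤ f := ENNReal.toReal_nonneg
  -- Step 3: real inequality
  have rkey : ∀ τ : ℝ, 0 < τ → (lam < 0 → τ < 1 / (-lam)) →
      a ^ 2 / (2 * τ) + f ≤
        (1 - s) * f0 + s * (d ^ 2 / (2 * τ) + f1)
          - 2⁻¹ * (1 / τ + lam) * (s * (1 - s)) * d ^ 2 := by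
    intro τ hτ hτ'
    have h := key τ hτ hτ'
    rw [← ecoe _ hfin] at h
    exact_mod_cast h
  constructor
  · -- distance estimate
    rw [dist_comm z0 (γ s)]
    show a ≤ s * d
    have hsq : a ^ 2 ≤ (s * d) ^ 2 := by
      by_contra hcon
      push_neg at hcon
      set C := (1 - s) * f0 + s * f1 - f + |lam| * d ^ 2 with hC
      set ε := a ^ 2 - (s * d) ^ 2 with hε
      have hεpos : 0 < ε := by simp only [hε]; linarith
      have hCpos : (0:ℝ) < |C| + 1 := by positivity
      obtain ⟨τ, hτpos, hτsmall, hτlam⟩ :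
          ∃ τ : ℝ, 0 < τ ∧ τ ≤ ε / (2 * (|C| + 1)) ∧ (lam < 0 → τ < 1 / (-lam)) :=
        ⟨min (ε / (2 * (|C| + 1))) τ₀, lt_min (by positivity) hτ₀,
          min_le_left _ _, fun hl => lt_of_le_of_lt (min_le_right _ _) (hτ₀' hl)⟩
      have h := rkey τ hτpos hτlam
      have h1 : s * (1 - s) ≤ 1 := by nlinarith
      have h2 : 0 ≤ s * (1 - s) := by nlinarith
      have h3 : -lam ≤ |lam| := neg_le_abs lam
      have h4 : (0:ℝ) ≤ d ^ 2 := sq_nonneg d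
      have hterm : -(2⁻¹ * (1 / τ + lam) * (s * (1 - s)) * d ^ 2)
          ≤ -((s * (1 - s)) * d ^ 2) / (2 * τ) + |lam| * d ^ 2 := by
        have hlam2 : -(lam) * (s * (1 - s)) * d ^ 2 ≤ |lam| * d ^ 2 := by
          nlinarith [mul_nonneg (mul_nonneg (by linarith : (0:ℝ) ≤ |lam| + lam) h2) h4,
            mul_nonneg (mul_nonneg (abs_nonneg lam) (by linarith : (0:ℝ) ≤ 1 - s * (1 - s))) h4]
        have e1 : -(2⁻¹ * (1 / τ + lam) * (s * (1 - s)) * d ^ 2)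
            = -((s * (1 - s)) * d ^ 2) / (2 * τ) + (-(lam) * (s * (1 - s)) * d ^ 2) / 2 := by
          field_simp
          ring
        rw [e1]
        have := mul_nonneg (abs_nonneg lam) h4
        linarith
      have expand : s * (d ^ 2 / (2 * τ)) + (-((s * (1 - s)) * d ^ 2) / (2 * τ))
          = (s * d) ^ 2 / (2 * τ) := by field_simp; ring
      have h5 : (a ^ 2 - (s * d) ^ 2) / (2 * τ) ≤ C := by
        rw [sub_div]
        have h6 : a ^ 2 / (2 * τ) + f ≤ (1 - s) * f0 + s * f1
            + (s * d) ^ 2 / (2 * τ) + |lam| * d ^ 2 := by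
          rw [← expand]
          linarith [h, hterm]
        simp only [hC]
        linarith
      have h9 : |C| + 1 ≤ (a ^ 2 - (s * d) ^ 2) / (2 * τ) := by
        rw [le_div_iff₀ (by linarith)]
        calc (|C| + 1) * (2 * τ) ≤ (|C| + 1) * (2 * (ε / (2 * (|C| + 1)))) := by nlinarith
          _ = ε := by field_simp
          _ = a ^ 2 - (s * d) ^ 2 := hε
      have h8 : C ≤ |C| := le_abs_self C
      linarith
    nlinarith [hsq, ha0, mul_nonneg hs0 hd0]
  · -- convexity estimate
    have freal : f ≤ (1 - s) * f0 + s * f1 + s * (max (-lam) 0 / 2) * d ^ 2 := by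
      refine le_of_forall_pos_le_add fun ε hε => ?_
      rcases lt_or_ge lam 0 with hl | hl
      · -- lam < 0
        set L := -lam with hL
        have hL0 : 0 < L := by simp [hL]; linarith
        have hmax : max (-lam) 0 = L := max_eq_left hL0.le
        set η := 2 * ε / (d ^ 2 + 1) with hη
        have hdpos : (0:ℝ) < d ^ 2 + 1 := by positivity
        have hη0 : 0 < η := by positivity
        set τ := (L + η)⁻¹ with hτdef
        have hτpos : 0 < τ := by positivity
        have hτlam : lam < 0 → τ < 1 / (-lam) := fun _ => by
          rw [hτdef, ← hL, one_div]
          exact inv_strictAnti₀ hL0 (by linarith)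
        have h1τ : 1 / τ = L + η := by rw [hτdef, one_div, inv_inv]
        have h := rkey τ hτpos hτlam
        rw [h1τ] at h
        have hsη : s * η * d ^ 2 / 2 ≤ ε := by
          have e1 : s * η * d ^ 2 / 2 = ε * (s * d ^ 2) / (d ^ 2 + 1) := by
            rw [hη]; ring
          rw [e1, div_le_iff₀ hdpos]
          nlinarith [mul_nonneg hε.le (sq_nonneg d),
            mul_nonneg (mul_nonneg hε.le (sq_nonneg d)) (sub_nonneg.2 hs1)]
        have hdiv : d ^ 2 / (2 * τ) = (L + η) * d ^ 2 / 2 := by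
          rw [hτdef]; field_simp
        rw [hdiv] at h
        have haτ : 0 ≤ a ^ 2 / (2 * τ) := by positivity
        rw [hmax, hL]
        have h2 : 0 ≤ s * (1 - s) := by nlinarith
        nlinarith [mul_nonneg (mul_nonneg h2 hη0.le) (sq_nonneg d)]
      · -- lam ≥ 0
        have hmax : max (-lam) 0 = 0 := max_eq_right (by linarith)
        set τ := (d ^ 2 + 1) / ε with hτdef
        have hdpos : (0:ℝ) < d ^ 2 + 1 := by positivity
        have hτpos : 0 < τ := by positivity
        have hτlam : lam < 0 → τ < 1 / (-lam) := fun hc => absurd hc (not_lt.2 hl)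
        have h := rkey τ hτpos hτlam
        have h1τ : 1 / τ = ε / (d ^ 2 + 1) := by
          rw [hτdef, one_div_div]
        rw [h1τ] at h
        have haτ : 0 ≤ a ^ 2 / (2 * τ) := by positivity
        have h2 : 0 ≤ s * (1 - s) := by nlinarith
        have hsub : 0 ≤ 2⁻¹ * (ε / (d ^ 2 + 1) + lam) * (s * (1 - s)) * d ^ 2 := by
          have : 0 ≤ ε / (d ^ 2 + 1) + lam := by positivity
          positivity
        have hsd : s * (d ^ 2 / (2 * τ)) ≤ ε := by
          have e1 : s * (d ^ 2 / (2 * τ)) = ε * (s * d ^ 2) / (2 * (d ^ 2 + 1)) := by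
            rw [hτdef]; field_simp
          rw [e1, div_le_iff₀ (by positivity)]
          nlinarith [mul_nonneg hε.le (sq_nonneg d),
            mul_nonneg (mul_nonneg hε.le (sq_nonneg d)) (sub_nonneg.2 hs1)]
        rw [hmax]
        nlinarith
    -- convert to ENNReal
    have e0 : φ z0 = ENNReal.ofReal f0 := (ENNReal.ofReal_toReal h0).symm
    have e1 : φ z1 = ENNReal.ofReal f1 := (ENNReal.ofReal_toReal h1).symm
    have es : φ (γ s) = ENNReal.ofReal f := (ENNReal.ofReal_toReal hfin).symm
    rw [e0, e1, es]
    rw [← ENNReal.ofReal_mul (by linarith), ← ENNReal.ofReal_mul hs0,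
      ← ENNReal.ofReal_add (by nlinarith) (by nlinarith),
      ← ENNReal.ofReal_add (by nlinarith) (by positivity)]
    exact ENNReal.ofReal_le_ofReal (by nlinarith [freal])
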